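/- Let 0 ≤ x ≤ 1, 0 ≤ w ≤ n, p ∈ [0,1] and θ ∈ ℝ satisfy x = p·cos²θ + (1−p)·sin²θ. Then ∑_{w′=0}^{n} ∑_{w̃=0}^{w′} C(w, w̃)·C(n−w, w′−w̃) · p^{w′}(1−p)^{n−w′} · (sin²θ)^{a} (cos²θ)^{n−a} = x^w (1−x)^{n−w}, where a = w + w′ − 2w̃. -/

import Mathlib

/-- The combinatorial identity computing the conditional effective channel coefficient
`x̄′_w = x^w (1−x)^{n−w}` for the repetition code under combined dephasing (probability `p`)
and Z-rotation (angle `θ`) noise, where `x = p·cos²θ + (1−p)·sin²θ`. -/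
theorem conditional_channel_coefficient (n w : ℕ) (hw : w ≤ n) (p θ x : ℝ)
    (hp : p ∈ Set.Icc (0 : ℝ) 1) (hx01 : x ∈ Set.Icc (0 : ℝ) 1)
    (hx : x = p * Real.cos θ ^ 2 + (1 - p) * Real.sin θ ^ 2) :
    ∑ w' ∈ Finset.range (n + 1), ∑ wt ∈ Finset.range (w' + 1),
        (Nat.choose w wt : ℝ) * (Nat.choose (n - w) (w' - wt) : ℝ) *
          p ^ w' * (1 - p) ^ (n - w') *
          (Real.sin θ ^ 2) ^ (w + w' - 2 * wt) * (Real.cos θ ^ 2) ^ (n - (w + w' - 2 * wt))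
      = x ^ w * (1 - x) ^ (n - w) := by
  set s := Real.sin θ ^ 2 with hs
  set c := Real.cos θ ^ 2 with hc
  have hpyth : s + c = 1 := by rw [hs, hc, add_comm]; exact Real.cos_sq_add_sin_sq θ
  have h1x : 1 - x = p * s + (1 - p) * c := by linear_combination -hx - hpyth
  set F : ℕ → ℕ → ℝ := fun wt w' =>
    (Nat.choose w wt : ℝ) * (Nat.choose (n - w) (w' - wt) : ℝ) *
      p ^ w' * (1 - p) ^ (n - w') * s ^ (w + w' - 2 * wt) * c ^ (n - (w + w' - 2 * wt)) with hF
  set G : ℕ × ℕ → ℝ := fun y =>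
    ((p * c) ^ y.1 * ((1 - p) * s) ^ (w - y.1) * (Nat.choose w y.1 : ℝ)) *
      ((p * s) ^ y.2 * ((1 - p) * c) ^ (n - w - y.2) * (Nat.choose (n - w) y.2 : ℝ)) with hG
  have hRHS : x ^ w * (1 - x) ^ (n - w)
      = ∑ y ∈ Finset.range (w + 1) ×ˢ Finset.range (n - w + 1), G y := by
    rw [h1x, hx, add_pow, add_pow, Finset.sum_mul_sum, Finset.sum_product]
  set Sig := (Finset.range (n + 1)).sigma (fun w' => Finset.range (w' + 1)) with hSig
  set A := Sig.filter (fun q : Σ _ : ℕ, ℕ => q.2 ≤ w ∧ q.1 - q.2 ≤ n - w) with hA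
  have hsub : A ⊆ Sig := Finset.filter_subset _ _
  have key1 : ∑ q ∈ Sig, F q.2 q.1 = ∑ q ∈ A, F q.2 q.1 := by
    refine (Finset.sum_subset hsub ?_).symm
    intro q hq hq'
    rw [hA, Finset.mem_filter] at hq'
    push_neg at hq'
    have hq'' := hq' hq
    simp only [hF]
    rcases le_or_gt q.2 w with h | h
    · have : n - w < q.1 - q.2 := by omega
      rw [Nat.choose_eq_zero_of_lt this]
      ring
    · rw [Nat.choose_eq_zero_of_lt h]
      ring
  have key2 : ∑ q ∈ A, F q.2 q.1
      = ∑ y ∈ Finset.range (w + 1) ×ˢ Finset.range (n - w + 1), G y := by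
    refine Finset.sum_nbij' (fun q : Σ _ : ℕ, ℕ => ((q.2, q.1 - q.2) : ℕ × ℕ))
      (fun y : ℕ × ℕ => (⟨y.1 + y.2, y.1⟩ : Σ _ : ℕ, ℕ)) ?_ ?_ ?_ ?_ ?_
    · intro q hq
      simp only [hA, hSig, Finset.mem_filter, Finset.mem_sigma, Finset.mem_range] at hq
      simp only [Finset.mem_product, Finset.mem_range]
      omega
    · intro y hy
      simp only [Finset.mem_product, Finset.mem_range] at hy
      simp only [hA, hSig, Finset.mem_filter, Finset.mem_sigma, Finset.mem_range]
      omega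
    · intro q hq
      simp only [hA, hSig, Finset.mem_filter, Finset.mem_sigma, Finset.mem_range] at hq
      obtain ⟨q1, q2⟩ := q
      simp only at hq ⊢
      have : q2 + (q1 - q2) = q1 := by omega
      simp [this]
    · intro y hy
      simp
    · intro q hq
      simp only [hA, hSig, Finset.mem_filter, Finset.mem_sigma, Finset.mem_range] at hq
      obtain ⟨⟨hq1, hq2⟩, hq3, hq4⟩ := hq
      obtain ⟨w', wt⟩ := q
      simp only [hG, hF]
      simp only at hq1 hq2 hq3 hq4 ⊢
      have e1 : p ^ w' = p ^ wt * p ^ (w' - wt) := by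
        rw [← pow_add]; congr 1; omega
      have e2 : (1 - p) ^ (n - w') = (1 - p) ^ (w - wt) * (1 - p) ^ (n - w - (w' - wt)) := by
        rw [← pow_add]; congr 1; omega
      have e3 : s ^ (w + w' - 2 * wt) = s ^ (w - wt) * s ^ (w' - wt) := by
        rw [← pow_add]; congr 1; omega
      have e4 : c ^ (n - (w + w' - 2 * wt)) = c ^ wt * c ^ (n - w - (w' - wt)) := by
        rw [← pow_add]; congr 1; omega
      rw [e1, e2, e3, e4]
      simp only [mul_pow]
      ring
  calc ∑ w' ∈ Finset.range (n + 1), ∑ wt ∈ Finset.range (w' + 1), F wt w'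
      = ∑ q ∈ Sig, F q.2 q.1 := by rw [hSig, Finset.sum_sigma]
    _ = x ^ w * (1 - x) ^ (n - w) := by rw [key1, key2, hRHS]
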